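/- Let 𝒳 ⊂ ℝ^d be measurable with 0 < vol(𝒳) < ∞, and let h* : 𝒳 → {0,1} with S* = {x ∈ 𝒳 : h*(x) = 0} of positive finite Lebesgue measure; let q(x) = 1{h*(x)=0} / vol(S*) be the uniform density on S*. Let p be a probability density on 𝒳 that is constant on S*, let h : 𝒳 → {0,1} be measurable with h(x) = 0 for every x with h*(x) = 0, let γ = ∫_𝒳 h(x) p(x) dx, and suppose ∫_𝒳 1{h*(x)=1}·1{h(x)=0}·p(x) dx ≤ ν, with γ + ν < 1 and η ∈ [0,1]. Define p'(x) = p(x)(1 − η h(x)) / ∫_𝒳 p(y)(1 − η h(y)) dy. Then for every x ∈ 𝒳: ((1 − η(γ − ν)) / (1 − γ − ν)) · p'(x) ≥ q(x). -/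

import Mathlib

open MeasureTheory

set_option maxHeartbeats 1000000 in
/-- Lemma 2 of the supplement: if `p` is a density on `𝒳` that
is constant on the sublevel set `S* = {x ∈ 𝒳 : h* x = 0}`, the classifier `h`
never downweights `S*`, has coverage `γ = ∫ h p`, and misses at most mass `ν`
of the superlevel set, then one multiplicative-weights update `p'` dominates
the uniform density `q` on `S*` up to the factor `(1 − η(γ−ν))/(1 − γ − ν)`. -/
theorem stmt6 {d : ℕ}
    (X : Set (EuclideanSpace ℝ (Fin d))) (hXmeas : MeasurableSet X)
    (hXpos : 0 < volume X) (hXfin : volume X ≠ ⊤)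
    (hstar h : EuclideanSpace ℝ (Fin d) → ℝ)
    (hstar01 : ∀ x, hstar x = 0 ∨ hstar x = 1)
    (h01 : ∀ x, h x = 0 ∨ h x = 1)
    (hmeas : Measurable h) (hstarmeas : Measurable hstar)
    (Sstar : Set (EuclideanSpace ℝ (Fin d)))
    (hSstar : Sstar = {x ∈ X | hstar x = 0})
    (hSpos : 0 < volume Sstar) (hSfin : volume Sstar ≠ ⊤)
    (q : EuclideanSpace ℝ (Fin d) → ℝ)
    (hq : ∀ x, q x = (if hstar x = 0 then (1 : ℝ) else 0) / (volume Sstar).toReal)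
    (p : EuclideanSpace ℝ (Fin d) → ℝ)
    (hpint : IntegrableOn p X volume)
    (hpnonneg : ∀ x ∈ X, 0 ≤ p x)
    (hpdens : ∫ x in X, p x = 1)
    (hpconst : ∀ x ∈ Sstar, ∀ y ∈ Sstar, p x = p y)
    (hhsub : ∀ x, hstar x = 0 → h x = 0)
    (γ ν η : ℝ)
    (hγ : γ = ∫ x in X, h x * p x)
    (hν : (∫ x in X, (if hstar x = 1 then (1 : ℝ) else 0) *
        (if h x = 0 then (1 : ℝ) else 0) * p x) ≤ ν)
    (hγν : γ + ν < 1)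
    (hη : η ∈ Set.Icc (0 : ℝ) 1)
    (p' : EuclideanSpace ℝ (Fin d) → ℝ)
    (hp' : ∀ x, p' x = p x * (1 - η * h x) / ∫ y in X, p y * (1 - η * h y)) :
    ∀ x ∈ X, (1 - η * (γ - ν)) / (1 - γ - ν) * p' x ≥ q x := by

  obtain ⟨hη0, hη1⟩ := hη
  have hSmeas : MeasurableSet Sstar := by
    rw [hSstar]
    exact hXmeas.inter (hstarmeas (measurableSet_singleton 0))
  have hVpos : 0 < (volume Sstar).toReal := ENNReal.toReal_pos hSpos.ne' hSfin
  set V := (volume Sstar).toReal with hV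
  -- nonnegativity facts
  have hνnn : 0 ≤ ν := by
    refine le_trans (setIntegral_nonneg hXmeas fun y hy => ?_) hν
    have := hpnonneg y hy
    split_ifs <;> simp_all
  have hγnn : 0 ≤ γ := by
    rw [hγ]
    refine setIntegral_nonneg hXmeas fun y hy => ?_
    have := hpnonneg y hy
    rcases h01 y with h0 | h1 <;> simp_all
  have hB : 0 < 1 - γ - ν := by linarith
  have hA : 0 < 1 - η * γ := by nlinarith [mul_le_mul_of_nonneg_right hη1 hγnn]
  have hηh : ∀ y, 0 ≤ 1 - η * h y := by
    intro y
    rcases h01 y with h0 | h1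
    · simp [h0]
    · simp [h1]; linarith
  -- integrability facts
  have hhb : ∀ y, ‖h y‖ ≤ 1 := by
    intro y; rcases h01 y with h0 | h1
    · simp [h0]
    · simp [h1]
  have hhp : IntegrableOn (fun y => h y * p y) X volume :=
    hpint.bdd_mul hmeas.aestronglyMeasurable (c := 1) (Filter.Eventually.of_forall hhb)
  have hind1meas : Measurable (fun y => if hstar y = (0:ℝ) then (1:ℝ) else 0) :=
    Measurable.ite (hstarmeas (measurableSet_singleton 0)) measurable_const measurable_const
  have hind1 : IntegrableOn (fun y => (if hstar y = (0:ℝ) then (1:ℝ) else 0) * p y) X volume :=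
    hpint.bdd_mul hind1meas.aestronglyMeasurable
      (c := 1) (Filter.Eventually.of_forall fun y => by split_ifs <;> simp)
  have hind2meas : Measurable (fun y => (if hstar y = (1:ℝ) then (1:ℝ) else 0) *
      (if h y = (0:ℝ) then (1:ℝ) else 0)) :=
    (Measurable.ite (hstarmeas (measurableSet_singleton 1)) measurable_const
      measurable_const).mul
      (Measurable.ite (hmeas (measurableSet_singleton 0)) measurable_const measurable_const)
  have hind2 : IntegrableOn (fun y => (if hstar y = (1:ℝ) then (1:ℝ) else 0) *
      (if h y = (0:ℝ) then (1:ℝ) else 0) * p y) X volume := by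
    have := hpint.bdd_mul hind2meas.aestronglyMeasurable
      (c := 1) (Filter.Eventually.of_forall fun y => by split_ifs <;> simp)
    simpa [mul_assoc, IntegrableOn] using this
  -- normalization constant
  have hZ : (∫ y in X, p y * (1 - η * h y)) = 1 - η * γ := by
    have heq : (fun y => p y * (1 - η * h y)) = fun y => p y - η * (h y * p y) := by
      funext y; ring
    rw [heq, integral_sub hpint (hhp.const_mul η), integral_const_mul, hpdens, hγ]
  -- main pointwise bound, used for x ∈ Sstar
  intro x hx
  rcases hstar01 x with hx0 | hx1
  · -- x ∈ Sstar
    have hxS : x ∈ Sstar := by rw [hSstar]; exact ⟨hx, hx0⟩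
    -- ∫ over Sstar of p = p x * V
    have hintS : (∫ y in X, (if hstar y = (0:ℝ) then (1:ℝ) else 0) * p y) = p x * V := by
      have e1 : (fun y => (if hstar y = (0:ℝ) then (1:ℝ) else 0) * p y) =
          fun y => Set.indicator (hstar ⁻¹' {0}) p y := by
        funext y
        by_cases hy : hstar y = 0 <;> simp [Set.indicator, hy]
      rw [e1, setIntegral_indicator (hstarmeas (measurableSet_singleton 0))]
      have e2 : X ∩ hstar ⁻¹' {0} = Sstar := by rw [hSstar]; ext y; simp [Set.mem_sep_iff]
      rw [e2, setIntegral_congr_fun hSmeas (fun y hy => hpconst y hy x hxS)]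
      simp [mul_comm]; left; rfl
    -- pointwise inequality
    have hpoint : ∀ y ∈ X, p y ≤ (if hstar y = (0:ℝ) then (1:ℝ) else 0) * p y +
        (h y * p y + (if hstar y = (1:ℝ) then (1:ℝ) else 0) *
          (if h y = (0:ℝ) then (1:ℝ) else 0) * p y) := by
      intro y hy
      have hpy := hpnonneg y hy
      rcases hstar01 y with h0 | h1
      · simp [h0, hhsub y h0]
      · rcases h01 y with hh0 | hh1
        · simp [h1, hh0]
        · simp [h1, hh1]
    have hsum := setIntegral_mono_on hpint (hind1.add (hhp.add hind2)) hXmeas hpoint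
    simp only [Pi.add_apply] at hsum
    rw [hpdens] at hsum
    have hadd1 : (∫ y in X, ((if hstar y = (0:ℝ) then (1:ℝ) else 0) * p y +
          (h y * p y + (if hstar y = (1:ℝ) then (1:ℝ) else 0) *
            (if h y = (0:ℝ) then (1:ℝ) else 0) * p y))) =
        (∫ y in X, (if hstar y = (0:ℝ) then (1:ℝ) else 0) * p y) +
          ∫ y in X, (h y * p y + (if hstar y = (1:ℝ) then (1:ℝ) else 0) *
            (if h y = (0:ℝ) then (1:ℝ) else 0) * p y) :=
      integral_add hind1 (hhp.add hind2)
    have hadd2 : (∫ y in X, (h y * p y + (if hstar y = (1:ℝ) then (1:ℝ) else 0) *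
            (if h y = (0:ℝ) then (1:ℝ) else 0) * p y)) =
        (∫ y in X, h y * p y) + ∫ y in X, (if hstar y = (1:ℝ) then (1:ℝ) else 0) *
            (if h y = (0:ℝ) then (1:ℝ) else 0) * p y :=
      integral_add hhp hind2
    rw [hadd1, hadd2, hintS, ← hγ] at hsum
    have hkey : 1 - γ - ν ≤ p x * V := by linarith
    -- final computation
    rw [hq x, hp' x, hZ, hhsub x hx0, if_pos hx0, ge_iff_le]
    have hC : 0 < 1 - η * (γ - ν) := by nlinarith [mul_nonneg hη0 hνnn]
    have expand : (1 - η * (γ - ν)) / (1 - γ - ν) * (p x * (1 - η * 0) / (1 - η * γ)) =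
        ((1 - η * (γ - ν)) * (p x * V)) / ((1 - γ - ν) * (1 - η * γ) * V) := by
      field_simp
      ring
    rw [expand, div_le_div_iff₀ hVpos (by positivity)]
    have h1 : (1 - η * γ) * (1 - γ - ν) ≤ (1 - η * (γ - ν)) * (p x * V) := by
      refine mul_le_mul (by nlinarith [mul_nonneg hη0 hνnn]) hkey hB.le hC.le
    nlinarith
  · -- hstar x = 1 : q x = 0
    rw [hq x, if_neg (by rw [hx1]; norm_num), zero_div, ge_iff_le]
    have hp'nn : 0 ≤ p' x := by
      rw [hp' x, hZ]
      exact div_nonneg (mul_nonneg (hpnonneg x hx) (hηh x)) hA.le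
    have hC : 0 ≤ (1 - η * (γ - ν)) / (1 - γ - ν) := by
      apply div_nonneg _ hB.le
      nlinarith [mul_nonneg hη0 hνnn]
    exact mul_nonneg hC hp'nn
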